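/- A planar complete multipartite graph in which every vertex has even degree and which has at least one edge is isomorphic to K_{2,2,2}, or to K_{2,2m} or K_{1,1,2m-1} for some positive integer m. -/

import Mathlib

open SimpleGraph

/-- `H` is a minor of `G`: disjoint nonempty connected branch sets with edges
between the branch sets of adjacent vertices of `H`. -/
def GraphMinor {W V : Type} (H : SimpleGraph W) (G : SimpleGraph V) : Prop :=
  ∃ f : W → Set V,
    (∀ w, (f w).Nonempty) ∧
    (∀ w, (G.induce (f w)).Connected) ∧
    (∀ w w', w ≠ w' → Disjoint (f w) (f w')) ∧
    (∀ w w', H.Adj w w' → ∃ x ∈ f w, ∃ y ∈ f w', G.Adj x y)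

/-- A graph is planar iff it has no `K₅` minor and no `K_{3,3}` minor (Wagner's theorem). -/
def IsPlanar {V : Type} (G : SimpleGraph V) : Prop :=
  ¬ GraphMinor (completeGraph (Fin 5)) G ∧
  ¬ GraphMinor (completeBipartiteGraph (Fin 3) (Fin 3)) G

/-- A triangulation on the sphere: a maximal planar graph with at least 4 vertices. -/
def IsSphereTriangulation {V : Type} (T : SimpleGraph V) : Prop :=
  4 ≤ Nat.card V ∧ IsPlanar T ∧
    ∀ u v : V, u ≠ v → ¬ T.Adj u v →
      ¬ IsPlanar (T ⊔ SimpleGraph.fromRel (fun a b => a = u ∧ b = v))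

/-- The complete tripartite graph `K_{a,b,c}`. -/
def KP3 (a b c : ℕ) : SimpleGraph (Fin a ⊕ Fin b ⊕ Fin c) :=
  (completeGraph (Fin 3)).comap
    (Sum.elim (fun _ => 0) (Sum.elim (fun _ => 1) (fun _ => 2)))

/-- The complete 4-partite graph `K_{a,b,c,d}`. -/
def KP4 (a b c d : ℕ) : SimpleGraph (Fin a ⊕ Fin b ⊕ Fin c ⊕ Fin d) :=
  (completeGraph (Fin 4)).comap
    (Sum.elim (fun _ => 0) (Sum.elim (fun _ => 1) (Sum.elim (fun _ => 2) (fun _ => 3))))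

lemma minor_of_injective_hom {W V : Type} {H : SimpleGraph W} {G : SimpleGraph V}
    (f : W → V) (hinj : Function.Injective f)
    (hadj : ∀ w w', H.Adj w w' → G.Adj (f w) (f w')) : GraphMinor H G := by
  refine ⟨fun w => {f w}, fun w => ⟨f w, rfl⟩, ?_, ?_, ?_⟩
  · intro w
    have hne : Nonempty (({f w} : Set V)) := ⟨⟨f w, rfl⟩⟩
    rw [SimpleGraph.connected_iff]
    refine ⟨fun u v => ?_, hne⟩
    have : u = v := Subsingleton.elim u v
    exact this ▸ SimpleGraph.Reachable.refl u
  · intro w w' hne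
    simp only [Set.disjoint_singleton_left, Set.mem_singleton_iff]
    exact fun h => hne (hinj h)
  · intro w w' h
    exact ⟨f w, rfl, f w', rfl, hadj _ _ h⟩

lemma no_K5 {V : Type} {G : SimpleGraph V} (hpl : IsPlanar G)
    (x : Fin 5 → V) (hx : Function.Injective x)
    (hadj : ∀ a b : Fin 5, a ≠ b → G.Adj (x a) (x b)) : False := by
  exact hpl.1 (minor_of_injective_hom x hx (fun a b h => hadj a b h))

lemma no_K33 {V : Type} {G : SimpleGraph V} (hpl : IsPlanar G)
    (x y : Fin 3 → V) (hx : Function.Injective x) (hy : Function.Injective y)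
    (hxy : ∀ a b, G.Adj (x a) (y b)) : False := by
  apply hpl.2
  refine minor_of_injective_hom (Sum.elim x y) ?_ ?_
  · rintro (a | a) (b | b) h
    · exact congrArg Sum.inl (hx h)
    · exact absurd h (hxy a b).ne
    · exact absurd h.symm (hxy b a).ne
    · exact congrArg Sum.inr (hy h)
  · rintro (a | a) (b | b) h <;> simp only [completeBipartiteGraph_adj] at h
    · simp at h
    · exact hxy a b
    · exact (hxy b a).symm
    · simp at h

section MP

variable {ι : Type} [Fintype ι] (V : ι → Type) [∀ i, Fintype (V i)]

/-- pick k distinct vertices whose parts lie in `s` -/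
lemma exists_inj_parts (k : ℕ) (s : Finset ι)
    (hs : k ≤ ∑ i ∈ s, Fintype.card (V i)) :
    ∃ x : Fin k → Σ i, V i, Function.Injective x ∧ ∀ a, (x a).1 ∈ s := by
  classical
  let T : Finset (Σ i, V i) := s.sigma (fun _ => Finset.univ)
  have hT : k ≤ T.card := by
    rw [Finset.card_sigma]
    simpa using hs
  obtain ⟨u, hu, hcard⟩ := Finset.exists_subset_card_eq hT
  let e : Fin k ≃ u := (u.equivFin.trans (finCongr hcard)).symm
  refine ⟨fun a => (e a).1, ?_, ?_⟩
  · intro a b h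
    exact e.injective (Subtype.ext h)
  · intro a
    have := hu (e a).2
    simp only [T, Finset.mem_sigma] at this
    exact this.1

lemma mp_no_K33 (hpl : IsPlanar (completeMultipartiteGraph V))
    (s t : Finset ι) (hd : Disjoint s t)
    (hs : 3 ≤ ∑ i ∈ s, Fintype.card (V i)) (ht : 3 ≤ ∑ i ∈ t, Fintype.card (V i)) :
    False := by
  obtain ⟨x, hx, hxs⟩ := exists_inj_parts V 3 s hs
  obtain ⟨y, hy, hyt⟩ := exists_inj_parts V 3 t ht
  refine no_K33 hpl x y hx hy fun a b => ?_
  have : (x a).1 ≠ (y b).1 := fun h =>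
    (Finset.disjoint_left.mp hd (hxs a)) (h ▸ hyt b)
  exact this

lemma mp_no_K5 (hpl : IsPlanar (completeMultipartiteGraph V))
    (S : Finset ι) (hS : ∀ i ∈ S, Nonempty (V i)) (h5 : 5 ≤ S.card) :
    False := by
  classical
  obtain ⟨u, hu, hcard⟩ := Finset.exists_subset_card_eq h5
  let e : Fin 5 ≃ u := (u.equivFin.trans (finCongr hcard)).symm
  have hne : ∀ a : Fin 5, Nonempty (V (e a).1) := fun a => hS _ (hu (e a).2)
  refine no_K5 hpl (fun a => ⟨(e a).1, (hne a).some⟩) ?_ ?_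
  · intro a b h
    have : (e a).1 = (e b).1 := congrArg Sigma.fst h
    exact e.injective (Subtype.ext this)
  · intro a b hab
    have : (e a).1 ≠ (e b).1 := fun h => hab (e.injective (Subtype.ext h))
    exact this

lemma iso3 {a b c : ℕ}
    (i₁ i₂ i₃ : ι) (h12 : i₁ ≠ i₂) (h13 : i₁ ≠ i₃) (h23 : i₂ ≠ i₃)
    (hemp : ∀ j, j ≠ i₁ → j ≠ i₂ → j ≠ i₃ → IsEmpty (V j))
    (c₁ : Fintype.card (V i₁) = a) (c₂ : Fintype.card (V i₂) = b)
    (c₃ : Fintype.card (V i₃) = c) :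
    Nonempty (completeMultipartiteGraph V ≃g KP3 a b c) := by
  classical
  let e₁ : V i₁ ≃ Fin a := Fintype.equivFinOfCardEq c₁
  let e₂ : V i₂ ≃ Fin b := Fintype.equivFinOfCardEq c₂
  let e₃ : V i₃ ≃ Fin c := Fintype.equivFinOfCardEq c₃
  let F : (Σ i, V i) → (Fin a ⊕ Fin b ⊕ Fin c) := fun v =>
    if h : v.1 = i₁ then Sum.inl (e₁ (h ▸ v.2))
    else if h2 : v.1 = i₂ then Sum.inr (Sum.inl (e₂ (h2 ▸ v.2)))
    else if h3 : v.1 = i₃ then Sum.inr (Sum.inr (e₃ (h3 ▸ v.2)))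
    else (hemp v.1 h h2 h3).elim v.2
  let Gi : (Fin a ⊕ Fin b ⊕ Fin c) → (Σ i, V i) :=
    Sum.elim (fun x => ⟨i₁, e₁.symm x⟩)
      (Sum.elim (fun y => ⟨i₂, e₂.symm y⟩) (fun z => ⟨i₃, e₃.symm z⟩))
  have hF1 : ∀ x : V i₁, F ⟨i₁, x⟩ = Sum.inl (e₁ x) := fun x => dif_pos rfl
  have hF2 : ∀ x : V i₂, F ⟨i₂, x⟩ = Sum.inr (Sum.inl (e₂ x)) := by
    intro x
    show dite _ _ _ = _
    rw [dif_neg (Ne.symm h12), dif_pos rfl]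
  have hF3 : ∀ x : V i₃, F ⟨i₃, x⟩ = Sum.inr (Sum.inr (e₃ x)) := by
    intro x
    show dite _ _ _ = _
    rw [dif_neg (Ne.symm h13), dif_neg (Ne.symm h23), dif_pos rfl]
  have hleft : Function.LeftInverse Gi F := by
    rintro ⟨j, x⟩
    by_cases h1 : j = i₁
    · subst h1; rw [hF1]; simp [Gi]
    · by_cases h2 : j = i₂
      · subst h2; rw [hF2]; simp [Gi]
      · by_cases h3 : j = i₃
        · subst h3; rw [hF3]; simp [Gi]
        · exact (hemp j h1 h2 h3).elim x
  have hright : Function.RightInverse Gi F := by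
    rintro (x | y | z)
    · show F ⟨i₁, e₁.symm x⟩ = _
      rw [hF1]; simp
    · show F ⟨i₂, e₂.symm y⟩ = _
      rw [hF2]; simp
    · show F ⟨i₃, e₃.symm z⟩ = _
      rw [hF3]; simp
  let E : (Σ i, V i) ≃ (Fin a ⊕ Fin b ⊕ Fin c) := ⟨F, Gi, hleft, hright⟩
  -- the label function of KP3
  let lab : (Fin a ⊕ Fin b ⊕ Fin c) → Fin 3 :=
    Sum.elim (fun _ => 0) (Sum.elim (fun _ => 1) (fun _ => 2))
  have hlab : ∀ v : Σ i, V i,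
      lab (F v) = if v.1 = i₁ then 0 else if v.1 = i₂ then 1 else 2 := by
    rintro ⟨j, x⟩
    by_cases h1 : j = i₁
    · subst h1; rw [hF1]; simp [lab]
    · by_cases h2 : j = i₂
      · subst h2; rw [hF2]; simp [lab, Ne.symm h12]
      · by_cases h3 : j = i₃
        · subst h3; rw [hF3]; simp [lab, Ne.symm h13, Ne.symm h23]
        · exact (hemp j h1 h2 h3).elim x
  refine ⟨⟨E, ?_⟩⟩
  intro v w
  show (completeGraph (Fin 3)).Adj (lab (F v)) (lab (F w)) ↔ _
  rw [hlab, hlab]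
  show (¬ _) ↔ (v.1 ≠ w.1)
  constructor
  · intro h hvw
    exact h (by rw [hvw])
  · intro hvw h
    apply hvw
    have hv : v.1 = i₁ ∨ v.1 = i₂ ∨ v.1 = i₃ := by
      by_contra hc
      push_neg at hc
      exact (hemp v.1 hc.1 hc.2.1 hc.2.2).elim v.2
    have hw : w.1 = i₁ ∨ w.1 = i₂ ∨ w.1 = i₃ := by
      by_contra hc
      push_neg at hc
      exact (hemp w.1 hc.1 hc.2.1 hc.2.2).elim w.2
    rcases hv with hv|hv|hv <;> rcases hw with hw|hw|hw <;>
      simp only [hv, hw, if_pos rfl, if_neg (Ne.symm h12), if_neg (Ne.symm h13),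
        if_neg (Ne.symm h23), if_neg h12, if_neg h13, if_neg h23] at h <;>
      first
        | exact hv.trans hw.symm
        | exact absurd h (by decide)

lemma iso2 {a b : ℕ}
    (i₁ i₂ : ι) (h12 : i₁ ≠ i₂)
    (hemp : ∀ j, j ≠ i₁ → j ≠ i₂ → IsEmpty (V j))
    (c₁ : Fintype.card (V i₁) = a) (c₂ : Fintype.card (V i₂) = b) :
    Nonempty (completeMultipartiteGraph V ≃g completeBipartiteGraph (Fin a) (Fin b)) := by
  classical
  let e₁ : V i₁ ≃ Fin a := Fintype.equivFinOfCardEq c₁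
  let e₂ : V i₂ ≃ Fin b := Fintype.equivFinOfCardEq c₂
  let F : (Σ i, V i) → (Fin a ⊕ Fin b) := fun v =>
    if h : v.1 = i₁ then Sum.inl (e₁ (h ▸ v.2))
    else if h2 : v.1 = i₂ then Sum.inr (e₂ (h2 ▸ v.2))
    else (hemp v.1 h h2).elim v.2
  let Gi : (Fin a ⊕ Fin b) → (Σ i, V i) :=
    Sum.elim (fun x => ⟨i₁, e₁.symm x⟩) (fun y => ⟨i₂, e₂.symm y⟩)
  have hF1 : ∀ x : V i₁, F ⟨i₁, x⟩ = Sum.inl (e₁ x) := fun x => dif_pos rfl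
  have hF2 : ∀ x : V i₂, F ⟨i₂, x⟩ = Sum.inr (e₂ x) := by
    intro x
    show dite _ _ _ = _
    rw [dif_neg (Ne.symm h12), dif_pos rfl]
  have hleft : Function.LeftInverse Gi F := by
    rintro ⟨j, x⟩
    by_cases h1 : j = i₁
    · subst h1; rw [hF1]; simp [Gi]
    · by_cases h2 : j = i₂
      · subst h2; rw [hF2]; simp [Gi]
      · exact (hemp j h1 h2).elim x
  have hright : Function.RightInverse Gi F := by
    rintro (x | y)
    · show F ⟨i₁, e₁.symm x⟩ = _
      rw [hF1]; simp
    · show F ⟨i₂, e₂.symm y⟩ = _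
      rw [hF2]; simp
  let E : (Σ i, V i) ≃ (Fin a ⊕ Fin b) := ⟨F, Gi, hleft, hright⟩
  refine ⟨⟨E, ?_⟩⟩
  intro v w
  show (completeBipartiteGraph (Fin a) (Fin b)).Adj (F v) (F w) ↔ (v.1 ≠ w.1)
  have hv : v.1 = i₁ ∨ v.1 = i₂ := by
    by_contra hc
    push_neg at hc
    exact (hemp v.1 hc.1 hc.2).elim v.2
  have hw : w.1 = i₁ ∨ w.1 = i₂ := by
    by_contra hc
    push_neg at hc
    exact (hemp w.1 hc.1 hc.2).elim w.2
  obtain ⟨j, x⟩ := v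
  obtain ⟨l, y⟩ := w
  simp only at hv hw
  rcases hv with hv|hv <;> rcases hw with hw|hw <;> subst hv <;> subst hw <;>
    simp only [hF1, hF2, completeBipartiteGraph_adj] <;> simp [h12, Ne.symm h12]

lemma mp_deg (v : Σ i, V i) :
    ((completeMultipartiteGraph V).neighborSet v).ncard
      = (∑ i, Fintype.card (V i)) - Fintype.card (V v.1) := by
  classical
  have h1 : (completeMultipartiteGraph V).neighborSet v = {w : Σ i, V i | ¬ (w.1 = v.1)} := by
    ext w
    simp [SimpleGraph.neighborSet, ne_comm]
  rw [h1, Set.ncard_eq_toFinset_card']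
  have h2 : ({w : Σ i, V i | ¬ (w.1 = v.1)}).toFinset
      = Finset.univ.filter (fun w : Σ i, V i => ¬ (w.1 = v.1)) := by
    ext w; simp
  rw [h2, Finset.filter_not, Finset.card_sdiff_of_subset (Finset.filter_subset _ _)]
  have h3 : Finset.univ.filter (fun w : Σ i, V i => w.1 = v.1)
      = ({v.1} : Finset ι).sigma fun _ => Finset.univ := by
    ext ⟨j, x⟩
    simp
  rw [h3, Finset.card_sigma, Finset.sum_singleton, Finset.card_univ, Finset.card_univ,
    Fintype.card_sigma]

end MP


set_option maxHeartbeats 1000000 in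
/-- A planar complete multipartite graph in which every vertex has even degree
and which has at least one edge is `K_{2,2,2}`, or `K_{2,2m}` or `K_{1,1,2m-1}`
for some positive integer `m`. -/
theorem completeMultipartite_planar_even {ι : Type} [Fintype ι]
    (V : ι → Type) [∀ i, Fintype (V i)]
    (hpl : IsPlanar (completeMultipartiteGraph V))
    (heven : ∀ v, Even (((completeMultipartiteGraph V).neighborSet v).ncard))
    (hedge : ∃ v w, (completeMultipartiteGraph V).Adj v w) :
    Nonempty (completeMultipartiteGraph V ≃g KP3 2 2 2) ∨
      ∃ m : ℕ, 1 ≤ m ∧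
        (Nonempty (completeMultipartiteGraph V ≃g completeBipartiteGraph (Fin 2) (Fin (2 * m))) ∨
         Nonempty (completeMultipartiteGraph V ≃g KP3 1 1 (2 * m - 1))) := by
  classical
  set n : ι → ℕ := fun i => Fintype.card (V i) with hn
  set S : Finset ι := Finset.univ.filter (fun i => 0 < n i) with hSdef
  set N : ℕ := ∑ i, n i with hNdef
  have memS : ∀ i, i ∈ S ↔ 0 < n i := by
    intro i; simp [hSdef]
  have hle : ∀ i, n i ≤ N := fun i =>
    Finset.single_le_sum (fun j _ => Nat.zero_le _) (Finset.mem_univ i)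
  have hNS : N = ∑ i ∈ S, n i := by
    rw [hNdef]
    refine (Finset.sum_subset (Finset.filter_subset _ _) ?_).symm
    intro i _ hi
    rw [memS] at hi
    omega
  have hnonempty : ∀ i ∈ S, Nonempty (V i) := by
    intro i hi
    rw [memS] at hi
    exact Fintype.card_pos_iff.mp hi
  have hparity : ∀ i ∈ S, Even (N - n i) := by
    intro i hi
    have x := (hnonempty i hi).some
    have := heven ⟨i, x⟩
    rwa [mp_deg] at this
  have hemp : ∀ j, j ∉ S → IsEmpty (V j) := by
    intro j hj
    rw [memS] at hj
    have : n j = 0 := by omega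
    exact Fintype.card_eq_zero_iff.mp this
  have split : ∀ s t : Finset ι, Disjoint s t → 3 ≤ ∑ i ∈ s, n i → 3 ≤ ∑ i ∈ t, n i → False :=
    fun s t hd hs ht => mp_no_K33 V hpl s t hd hs ht
  -- at least two parts
  obtain ⟨v, w, hvw⟩ := hedge
  have hvw1 : v.1 ≠ w.1 := hvw
  have hvS : v.1 ∈ S := (memS _).mpr (Fintype.card_pos_iff.mpr ⟨v.2⟩)
  have hwS : w.1 ∈ S := (memS _).mpr (Fintype.card_pos_iff.mpr ⟨w.2⟩)
  have hS2 : 2 ≤ S.card := Finset.one_lt_card.mpr ⟨v.1, hvS, w.1, hwS, hvw1⟩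
  have hS4 : S.card ≤ 4 := by
    by_contra h
    exact mp_no_K5 V hpl S hnonempty (by omega)
  -- helper for the 2-part case
  have key2 : ∀ a b : ι, a ≠ b → S = {a, b} → n a = 2 → Even (n b) →
      (Nonempty (completeMultipartiteGraph V ≃g KP3 2 2 2) ∨
      ∃ m : ℕ, 1 ≤ m ∧
        (Nonempty (completeMultipartiteGraph V ≃g completeBipartiteGraph (Fin 2) (Fin (2 * m))) ∨
         Nonempty (completeMultipartiteGraph V ≃g KP3 1 1 (2 * m - 1)))) := by
    intro a b hab hSab hna hnb
    have hbS : b ∈ S := by rw [hSab]; simp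
    have hb1 : 1 ≤ n b := (memS b).mp hbS
    obtain ⟨m, hm⟩ := hnb
    have hm1 : 1 ≤ m := by omega
    refine Or.inr ⟨m, hm1, Or.inl ?_⟩
    refine iso2 V a b hab ?_ hna (show n b = 2 * m by omega)
    intro j hja hjb
    apply hemp
    rw [hSab]
    simp [hja, hjb]
  -- helper for the K_{1,1,c} case
  have key11c : ∀ a b c : ι, a ≠ b → a ≠ c → b ≠ c → S = {a, b, c} →
      n a = 1 → n b = 1 → Odd (n c) →
      (Nonempty (completeMultipartiteGraph V ≃g KP3 2 2 2) ∨
      ∃ m : ℕ, 1 ≤ m ∧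
        (Nonempty (completeMultipartiteGraph V ≃g completeBipartiteGraph (Fin 2) (Fin (2 * m))) ∨
         Nonempty (completeMultipartiteGraph V ≃g KP3 1 1 (2 * m - 1)))) := by
    intro a b c hab hac hbc hSabc hna hnb hnc
    have hcS : c ∈ S := by rw [hSabc]; simp
    have hc1 : 1 ≤ n c := (memS c).mp hcS
    obtain ⟨m', hm'⟩ := hnc
    have hm1 : 1 ≤ m' + 1 := by omega
    refine Or.inr ⟨m' + 1, hm1, Or.inr ?_⟩
    refine iso3 V a b c hab hac hbc ?_ hna hnb (show n c = 2 * (m' + 1) - 1 by omega)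
    intro j hja hjb hjc
    apply hemp
    rw [hSabc]
    simp [hja, hjb, hjc]
  -- case on the number of parts
  interval_cases hcard : S.card
  · -- 2 parts
    obtain ⟨a, b, hab, hSab⟩ := Finset.card_eq_two.mp hcard
    have haS : a ∈ S := by rw [hSab]; simp
    have hbS : b ∈ S := by rw [hSab]; simp
    have hNab : N = n a + n b := by
      rw [hNS, hSab, Finset.sum_insert (by simp [hab]), Finset.sum_singleton]
    have hea : Even (n b) := by
      have := hparity a haS
      have h' : N - n a = n b := by omega
      rwa [h'] at this
    have heb : Even (n a) := by
      have := hparity b hbS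
      have h' : N - n b = n a := by omega
      rwa [h'] at this
    have ha1 : 1 ≤ n a := (memS a).mp haS
    have hb1 : 1 ≤ n b := (memS b).mp hbS
    have ha2 : 2 ≤ n a := by
      rcases heb with ⟨k, hk⟩; omega
    have hb2 : 2 ≤ n b := by
      rcases hea with ⟨k, hk⟩; omega
    by_cases hbig : 3 ≤ n a ∧ 3 ≤ n b
    · exact (split {a} {b} (by simp [hab, Ne.symm hab]) (by simpa using hbig.1)
        (by simpa using hbig.2)).elim
    · rw [not_and_or] at hbig
      rcases hbig with h | h
      · exact key2 a b hab hSab (by omega) hea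
      · refine key2 b a hab.symm ?_ (by omega) heb
        rw [hSab]; exact Finset.pair_comm a b
  · -- 3 parts
    obtain ⟨a, b, c, hab, hac, hbc, hSabc⟩ := Finset.card_eq_three.mp hcard
    have haS : a ∈ S := by rw [hSabc]; simp
    have hbS : b ∈ S := by rw [hSabc]; simp
    have hcS : c ∈ S := by rw [hSabc]; simp
    have ha1 : 1 ≤ n a := (memS a).mp haS
    have hb1 : 1 ≤ n b := (memS b).mp hbS
    have hc1 : 1 ≤ n c := (memS c).mp hcS
    have hNabc : N = n a + n b + n c := by
      rw [hNS, hSabc, Finset.sum_insert (by simp [hab, hac]),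
        Finset.sum_insert (by simp [hbc]), Finset.sum_singleton]
      ring
    have hpa := hparity a haS
    have hpb := hparity b hbS
    have hpc := hparity c hcS
    rw [Nat.even_sub (hle a)] at hpa
    rw [Nat.even_sub (hle b)] at hpb
    rw [Nat.even_sub (hle c)] at hpc
    -- splits
    have splita : 3 ≤ n a → 3 ≤ n b + n c → False := by
      intro h1 h2
      exact split {a} {b, c} (by simp [hab, hac, Ne.symm hab, Ne.symm hac]) (by simpa)
        (by rw [Finset.sum_insert (by simp [hbc]), Finset.sum_singleton]; omega)
    have splitb : 3 ≤ n b → 3 ≤ n a + n c → False := by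
      intro h1 h2
      exact split {b} {a, c} (by simp [hab, Ne.symm hab, hbc, Ne.symm hbc]) (by simpa)
        (by rw [Finset.sum_insert (by simp [hac]), Finset.sum_singleton]; omega)
    have splitc : 3 ≤ n c → 3 ≤ n a + n b → False := by
      intro h1 h2
      exact split {c} {a, b} (by simp [hac, hbc, Ne.symm hac, Ne.symm hbc]) (by simpa)
        (by rw [Finset.sum_insert (by simp [hab]), Finset.sum_singleton]; omega)
    by_cases hsmall : n a ≤ 2 ∧ n b ≤ 2 ∧ n c ≤ 2
    · obtain ⟨hA, hB, hC⟩ := hsmall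
      have hcases : (n a = 1 ∧ n b = 1 ∧ n c = 1) ∨ (n a = 2 ∧ n b = 2 ∧ n c = 2) := by
        simp only [Nat.even_iff] at hpa hpb hpc
        omega
      rcases hcases with ⟨h1, h2, h3⟩ | ⟨h1, h2, h3⟩
      · exact key11c a b c hab hac hbc hSabc h1 h2 ⟨0, by omega⟩
      · refine Or.inl (iso3 V a b c hab hac hbc ?_ h1 h2 h3)
        intro j hja hjb hjc
        apply hemp
        rw [hSabc]
        simp [hja, hjb, hjc]
    · have hbig3 : 3 ≤ n a ∨ 3 ≤ n b ∨ 3 ≤ n c := by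
        by_contra hc'
        push_neg at hc'
        exact hsmall ⟨by omega, by omega, by omega⟩
      rcases hbig3 with h3a' | h3b' | h3c'
      · -- n a ≥ 3, so n b = n c = 1 and n a odd
        have hb : n b = 1 := by
          by_contra hne
          have hb2 : 2 ≤ n b := by omega
          exact splita h3a' (by omega)
        have hc : n c = 1 := by
          by_contra hne
          have hc2 : 2 ≤ n c := by omega
          exact splita h3a' (by omega)
        have hNodd : ¬ Even N := by
          intro hE
          have := hpb.mp hE
          rw [hb] at this
          exact (Nat.not_even_one) this
        have hodda : Odd (n a) := by
          rw [Nat.odd_iff]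
          simp only [Nat.even_iff] at hNodd hpa
          omega
        refine key11c b c a hbc hab.symm hac.symm ?_ hb hc hodda
        rw [hSabc, Finset.insert_comm, Finset.pair_comm]
      · have ha' : n a = 1 := by
          by_contra hne
          exact splitb h3b' (by omega)
        have hc : n c = 1 := by
          by_contra hne
          exact splitb h3b' (by omega)
        have hNodd : ¬ Even N := by
          intro hE
          have := hpa.mp hE
          rw [ha'] at this
          exact (Nat.not_even_one) this
        have hoddb : Odd (n b) := by
          rw [Nat.odd_iff]
          simp only [Nat.even_iff] at hNodd hpb
          omega
        refine key11c a c b hac hab hbc.symm ?_ ha' hc hoddb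
        rw [hSabc, Finset.pair_comm]
      · have ha' : n a = 1 := by
          by_contra hne
          exact splitc h3c' (by omega)
        have hb : n b = 1 := by
          by_contra hne
          exact splitc h3c' (by omega)
        have hNodd : ¬ Even N := by
          intro hE
          have := hpa.mp hE
          rw [ha'] at this
          exact (Nat.not_even_one) this
        have hoddc : Odd (n c) := by
          rw [Nat.odd_iff]
          simp only [Nat.even_iff] at hNodd hpc
          omega
        exact key11c a b c hab hac hbc hSabc ha' hb hoddc
  · -- 4 parts: impossible
    exfalso
    have hEvenN : Even N := by
      by_contra hodd
      have hallodd : ∀ i ∈ S, Odd (n i) := by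
        intro i hi
        have hp := hparity i hi
        rw [Nat.even_sub (hle i)] at hp
        rw [Nat.odd_iff]
        simp only [Nat.even_iff] at hodd hp
        omega
      apply hodd
      rw [hNS, Finset.even_sum_iff_even_card_odd]
      have : S.filter (fun i => Odd (n i)) = S := Finset.filter_true_of_mem hallodd
      rw [this, hcard]
      decide
    have h2each : ∀ i ∈ S, 2 ≤ n i := by
      intro i hi
      have hp := hparity i hi
      rw [Nat.even_sub (hle i)] at hp
      have h1 : 1 ≤ n i := (memS i).mp hi
      have h2 : Even (n i) := hp.mp hEvenN
      simp only [Nat.even_iff] at h2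
      omega
    obtain ⟨s, hs, hscard⟩ := Finset.exists_subset_card_eq (s := S) (n := 2) (by omega)
    have htcard : (S \ s).card = 2 := by
      rw [Finset.card_sdiff_of_subset hs, hcard, hscard]
    have hssum : 3 ≤ ∑ i ∈ s, n i := by
      have := Finset.card_nsmul_le_sum s n 2 (fun x hx => h2each x (hs hx))
      rw [hscard] at this
      simpa using (by omega : 3 ≤ 2 * 2).trans (by simpa [smul_eq_mul] using this)
    have htsum : 3 ≤ ∑ i ∈ S \ s, n i := by
      have := Finset.card_nsmul_le_sum (S \ s) n 2
        (fun x hx => h2each x (Finset.mem_sdiff.mp hx).1)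
      rw [htcard] at this
      simpa using (by omega : 3 ≤ 2 * 2).trans (by simpa [smul_eq_mul] using this)
    exact split s (S \ s) Finset.disjoint_sdiff hssum htsum
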